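/- The field extensions k(𝒪)|k(x), k(𝒪)|k(y) and k(𝒪)|k(x,y) are Galois extensions (algebraic extensions whose field of elements fixed by all automorphisms over the base equals the base field). -/

import Mathlib

open IntermediateField
open scoped BigOperators Classical

set_option synthInstance.maxHeartbeats 1000000
set_option maxHeartbeats 1600000

noncomputable section

namespace QuadrantWalk

variable {K : Type} [Field K] [Algebra ℂ K]

/-- Evaluation of the step (Laurent) polynomial `S(X,Y) = ∑ w_{i,j} X^i Y^j`
    at a pair of elements of a field. -/
def stepEval (St : Finset (ℤ × ℤ)) (w : ℤ × ℤ → ℂ) (u v : K) : K :=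
  ∑ p ∈ St, algebraMap ℂ K (w p) * u ^ p.1 * v ^ p.2

/-- The step polynomial involves both `X` and `Y`. -/
def NotUnivariate (St : Finset (ℤ × ℤ)) : Prop :=
  (∃ p ∈ St, ∃ q ∈ St, p.1 ≠ q.1) ∧ ∃ p ∈ St, ∃ q ∈ St, p.2 ≠ q.2

/-- The kernel polynomial `K̃(X,Y,t) = X^mx * Y^my * (1 - t·S(X,Y))` as an element of
`ℂ[X,Y,t]`, with variables `0 ↦ X`, `1 ↦ Y`, `2 ↦ t`. -/
def kernelPoly (St : Finset (ℤ × ℤ)) (w : ℤ × ℤ → ℂ) (mx my : ℕ) :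
    MvPolynomial (Fin 3) ℂ :=
  MvPolynomial.X 0 ^ mx * MvPolynomial.X 1 ^ my -
    MvPolynomial.X 2 *
      ∑ p ∈ St, MvPolynomial.C (w p) *
        MvPolynomial.X 0 ^ (p.1 + (mx : ℤ)).toNat *
        MvPolynomial.X 1 ^ (p.2 + (my : ℤ)).toNat

/-- `-mx` (resp. `-my`) is the smallest `X`-exponent (resp. `Y`-exponent) of the model. -/
structure ExponentBounds (St : Finset (ℤ × ℤ)) (mx my : ℕ) : Prop where
  lowerX : ∀ p ∈ St, -(mx : ℤ) ≤ p.1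
  lowerY : ∀ p ∈ St, -(my : ℤ) ≤ p.2
  attainX : ∃ p ∈ St, p.1 = -(mx : ℤ)
  attainY : ∃ p ∈ St, p.2 = -(my : ℤ)

/-- `x`-adjacency : equal first coordinates and equal values of `S`. -/
def XAdj (St : Finset (ℤ × ℤ)) (w : ℤ × ℤ → ℂ) (a b : K × K) : Prop :=
  a.1 = b.1 ∧ stepEval St w a.1 a.2 = stepEval St w b.1 b.2

/-- `y`-adjacency : equal second coordinates and equal values of `S`. -/
def YAdj (St : Finset (ℤ × ℤ)) (w : ℤ × ℤ → ℂ) (a b : K × K) : Prop :=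
  a.2 = b.2 ∧ stepEval St w a.1 a.2 = stepEval St w b.1 b.2

/-- Adjacency. -/
def Adj (St : Finset (ℤ × ℤ)) (w : ℤ × ℤ → ℂ) (a b : K × K) : Prop :=
  XAdj St w a b ∨ YAdj St w a b

/-- The orbit of the walk: the equivalence class of `(x,y)` under the
reflexive-transitive closure of adjacency. -/
def orbit (St : Finset (ℤ × ℤ)) (w : ℤ × ℤ → ℂ) (x y : K) : Set (K × K) :=
  {a | Relation.ReflTransGen (Adj St w) (x, y) a}

/-- `k = ℂ(S(x,y))`. -/
def kF (St : Finset (ℤ × ℤ)) (w : ℤ × ℤ → ℂ) (x y : K) : IntermediateField ℂ K :=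
  adjoin ℂ {stepEval St w x y}

/-- `k(x) = ℂ(x, S(x,y))`. -/
def kxF (St : Finset (ℤ × ℤ)) (w : ℤ × ℤ → ℂ) (x y : K) : IntermediateField ℂ K :=
  adjoin ℂ {x, stepEval St w x y}

/-- `k(y) = ℂ(y, S(x,y))`. -/
def kyF (St : Finset (ℤ × ℤ)) (w : ℤ × ℤ → ℂ) (x y : K) : IntermediateField ℂ K :=
  adjoin ℂ {y, stepEval St w x y}

/-- `k(x,y) = ℂ(x,y)`. -/
def kxyF (x y : K) : IntermediateField ℂ K := adjoin ℂ {x, y}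

/-- `k(𝒪)`: the subfield generated over `k` by all coordinates of the orbit. -/
def orbitF (St : Finset (ℤ × ℤ)) (w : ℤ × ℤ → ℂ) (x y : K) : IntermediateField ℂ K :=
  adjoin ℂ ({stepEval St w x y} ∪ {z | ∃ a ∈ orbit St w x y, z = a.1 ∨ z = a.2})

/-- The standing hypotheses: nonzero weights, a non-univariate step polynomial,
`x, y` algebraically independent over `ℂ`, and `𝕂` an algebraic closure of `ℂ(x,y)`. -/
structure Setting (St : Finset (ℤ × ℤ)) (w : ℤ × ℤ → ℂ) (x y : K) : Prop where
  weight_ne : ∀ p ∈ St, w p ≠ 0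
  notUniv : NotUnivariate St
  indep : AlgebraicIndependent ℂ ![x, y]
  algClosed : IsAlgClosed K
  algebraic : Algebra.IsAlgebraic (kxyF x y) K

lemma self_mem_orbit (St : Finset (ℤ × ℤ)) (w : ℤ × ℤ → ℂ) (x y : K) :
    (x, y) ∈ orbit St w x y := Relation.ReflTransGen.refl

lemma x_mem_orbitF (St : Finset (ℤ × ℤ)) (w : ℤ × ℤ → ℂ) (x y : K) :
    x ∈ orbitF St w x y := by
  apply subset_adjoin
  exact Set.mem_union_right _ ⟨(x, y), self_mem_orbit St w x y, Or.inl rfl⟩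

lemma y_mem_orbitF (St : Finset (ℤ × ℤ)) (w : ℤ × ℤ → ℂ) (x y : K) :
    y ∈ orbitF St w x y := by
  apply subset_adjoin
  exact Set.mem_union_right _ ⟨(x, y), self_mem_orbit St w x y, Or.inr rfl⟩

lemma S_mem_orbitF (St : Finset (ℤ × ℤ)) (w : ℤ × ℤ → ℂ) (x y : K) :
    stepEval St w x y ∈ orbitF St w x y := by
  apply subset_adjoin
  exact Set.mem_union_left _ rfl

lemma x_mem_kxF (St : Finset (ℤ × ℤ)) (w : ℤ × ℤ → ℂ) (x y : K) :
    x ∈ kxF St w x y :=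
  subset_adjoin ℂ _ (Set.mem_insert _ _)

lemma S_mem_kxF (St : Finset (ℤ × ℤ)) (w : ℤ × ℤ → ℂ) (x y : K) :
    stepEval St w x y ∈ kxF St w x y :=
  subset_adjoin ℂ _ (Set.mem_insert_of_mem _ rfl)

lemma y_mem_kyF (St : Finset (ℤ × ℤ)) (w : ℤ × ℤ → ℂ) (x y : K) :
    y ∈ kyF St w x y :=
  subset_adjoin ℂ _ (Set.mem_insert _ _)

lemma S_mem_kyF (St : Finset (ℤ × ℤ)) (w : ℤ × ℤ → ℂ) (x y : K) :
    stepEval St w x y ∈ kyF St w x y :=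
  subset_adjoin ℂ _ (Set.mem_insert_of_mem _ rfl)

/-- The subgroup of `ℂ`-automorphisms of `M` fixing the subfield `E` pointwise. -/
def fixingAuts (E M : IntermediateField ℂ K) : Subgroup (↥M ≃ₐ[ℂ] ↥M) where
  carrier := {σ | ∀ (z : K) (_ : z ∈ E) (hzM : z ∈ M), σ ⟨z, hzM⟩ = ⟨z, hzM⟩}
  one_mem' := fun _ _ _ => rfl
  mul_mem' := by
    intro σ τ hσ hτ z hzE hzM
    show σ (τ ⟨z, hzM⟩) = ⟨z, hzM⟩
    rw [hτ z hzE hzM, hσ z hzE hzM]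
  inv_mem' := by
    intro σ hσ z hzE hzM
    show σ.symm ⟨z, hzM⟩ = ⟨z, hzM⟩
    conv_lhs => rw [← hσ z hzE hzM]
    exact σ.symm_apply_apply _

/-- The Galois group `G_x = Gal(k(𝒪)|k(x))`. -/
def Gx (St : Finset (ℤ × ℤ)) (w : ℤ × ℤ → ℂ) (x y : K) :
    Subgroup (↥(orbitF St w x y) ≃ₐ[ℂ] ↥(orbitF St w x y)) :=
  fixingAuts (kxF St w x y) (orbitF St w x y)

/-- The Galois group `G_y = Gal(k(𝒪)|k(y))`. -/
def Gy (St : Finset (ℤ × ℤ)) (w : ℤ × ℤ → ℂ) (x y : K) :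
    Subgroup (↥(orbitF St w x y) ≃ₐ[ℂ] ↥(orbitF St w x y)) :=
  fixingAuts (kyF St w x y) (orbitF St w x y)

/-- The Galois group `G_{xy} = Gal(k(𝒪)|k(x,y))`. -/
def Gxy (St : Finset (ℤ × ℤ)) (w : ℤ × ℤ → ℂ) (x y : K) :
    Subgroup (↥(orbitF St w x y) ≃ₐ[ℂ] ↥(orbitF St w x y)) :=
  fixingAuts (kxyF x y) (orbitF St w x y)

/-- Extend an automorphism of an intermediate field to a map on all of `K`
(by the identity outside). -/
def extendAut {M : IntermediateField ℂ K} (σ : ↥M ≃ₐ[ℂ] ↥M) (z : K) : K :=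
  if h : z ∈ M then (σ ⟨z, h⟩ : K) else z

/-- The coordinate-wise action of an automorphism on a `0`-chain. -/
def actChain {M : IntermediateField ℂ K} (σ : ↥M ≃ₐ[ℂ] ↥M)
    (γ : (K × K) →₀ ℂ) : (K × K) →₀ ℂ :=
  Finsupp.mapDomain (Prod.map (extendAut σ) (extendAut σ)) γ

/-- Evaluation of a polynomial `P(X,Y,t)` at `(u, v, 1/S(x,y))` for `(u,v) = a`. -/
def evalPt (St : Finset (ℤ × ℤ)) (w : ℤ × ℤ → ℂ) (x y : K)
    (P : MvPolynomial (Fin 3) ℂ) (a : K × K) : K :=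
  MvPolynomial.aeval ![a.1, a.2, (stepEval St w x y)⁻¹] P

/-- Evaluation of a polynomial `P(X,Y,t)` at `(x, y, 1/S(x,y))`. -/
def evalXY (St : Finset (ℤ × ℤ)) (w : ℤ × ℤ → ℂ) (x y : K)
    (P : MvPolynomial (Fin 3) ℂ) : K :=
  evalPt St w x y P (x, y)

/-- Evaluation of the fraction `A/B` at `(a.1, a.2, 1/S(x,y))`. -/
def fracEval (St : Finset (ℤ × ℤ)) (w : ℤ × ℤ → ℂ) (x y : K)
    (A B : MvPolynomial (Fin 3) ℂ) (a : K × K) : K :=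
  evalPt St w x y A a / evalPt St w x y B a

/-- Evaluation (orbit sum) of the fraction `A/B` on a `0`-chain. -/
def chainEval (St : Finset (ℤ × ℤ)) (w : ℤ × ℤ → ℂ) (x y : K)
    (A B : MvPolynomial (Fin 3) ℂ) (γ : (K × K) →₀ ℂ) : K :=
  γ.sum fun a c => algebraMap ℂ K c * fracEval St w x y A B a

/-- A `0`-chain cancels decoupled fractions: the orbit sum of every regular fraction
of the form `F(X,t) + G(Y,t)` on it vanishes. -/
def CancelsDecoupled (St : Finset (ℤ × ℤ)) (w : ℤ × ℤ → ℂ) (mx my : ℕ)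
    (x y : K) (α : (K × K) →₀ ℂ) : Prop :=
  ∀ A₁ B₁ A₂ B₂ : MvPolynomial (Fin 3) ℂ,
    A₁ ∈ MvPolynomial.supported ℂ ({0, 2} : Set (Fin 3)) →
    B₁ ∈ MvPolynomial.supported ℂ ({0, 2} : Set (Fin 3)) →
    A₂ ∈ MvPolynomial.supported ℂ ({1, 2} : Set (Fin 3)) →
    B₂ ∈ MvPolynomial.supported ℂ ({1, 2} : Set (Fin 3)) →
    ¬ kernelPoly St w mx my ∣ B₁ → ¬ kernelPoly St w mx my ∣ B₂ →
    (α.sum fun a c =>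
      algebraMap ℂ K c * (fracEval St w x y A₁ B₁ a + fracEval St w x y A₂ B₂ a)) = 0

/-- The field of fractions `ℂ(X,Y,t)`. -/
abbrev FF : Type := FractionRing (MvPolynomial (Fin 3) ℂ)

/-- The inclusion of `ℂ[X,Y,t]` into `ℂ(X,Y,t)`. -/
def toFF (P : MvPolynomial (Fin 3) ℂ) : FF := algebraMap (MvPolynomial (Fin 3) ℂ) FF P

/-- The regular fraction `A/B` admits a Galois decoupling:
`A/B = F + G + K̃·R` with `F ∈ ℂ(X,t)`, `G ∈ ℂ(Y,t)` and `R` regular. -/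
def AdmitsDecoupling (St : Finset (ℤ × ℤ)) (w : ℤ × ℤ → ℂ) (mx my : ℕ)
    (A B : MvPolynomial (Fin 3) ℂ) : Prop :=
  ∃ F₁ F₂ G₁ G₂ R₁ R₂ : MvPolynomial (Fin 3) ℂ,
    F₁ ∈ MvPolynomial.supported ℂ ({0, 2} : Set (Fin 3)) ∧
    F₂ ∈ MvPolynomial.supported ℂ ({0, 2} : Set (Fin 3)) ∧
    G₁ ∈ MvPolynomial.supported ℂ ({1, 2} : Set (Fin 3)) ∧
    G₂ ∈ MvPolynomial.supported ℂ ({1, 2} : Set (Fin 3)) ∧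
    ¬ kernelPoly St w mx my ∣ F₂ ∧ ¬ kernelPoly St w mx my ∣ G₂ ∧
    ¬ kernelPoly St w mx my ∣ R₂ ∧
    toFF A / toFF B =
      toFF F₁ / toFF F₂ + toFF G₁ / toFF G₂ +
        toFF (kernelPoly St w mx my) * (toFF R₁ / toFF R₂)

/-- `(I, J) = (A/B, Cc/D)` is a pair of Galois invariants: `I - J = K̃·R` with `R` regular. -/
def IsInvariantPair (St : Finset (ℤ × ℤ)) (w : ℤ × ℤ → ℂ) (mx my : ℕ)
    (A B Cc D : MvPolynomial (Fin 3) ℂ) : Prop :=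
  ∃ R₁ R₂ : MvPolynomial (Fin 3) ℂ, ¬ kernelPoly St w mx my ∣ R₂ ∧
    toFF A / toFF B - toFF Cc / toFF D =
      toFF (kernelPoly St w mx my) * (toFF R₁ / toFF R₂)

/-- A constant pair of Galois invariants: both members are equivalent to a
common fraction `c ∈ ℂ(t)` modulo `K̃`. -/
def IsConstantPair (St : Finset (ℤ × ℤ)) (w : ℤ × ℤ → ℂ) (mx my : ℕ)
    (A B Cc D : MvPolynomial (Fin 3) ℂ) : Prop :=
  IsInvariantPair St w mx my A B Cc D ∧
  ∃ c₁ c₂ : MvPolynomial (Fin 3) ℂ,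
    c₁ ∈ MvPolynomial.supported ℂ ({2} : Set (Fin 3)) ∧
    c₂ ∈ MvPolynomial.supported ℂ ({2} : Set (Fin 3)) ∧ c₂ ≠ 0 ∧
    IsInvariantPair St w mx my A B c₁ c₂ ∧ IsInvariantPair St w mx my Cc D c₁ c₂

/-- `(γx, γy)` is a pseudo-decoupling of `(x,y)`. -/
def PseudoDecoupling (St : Finset (ℤ × ℤ)) (w : ℤ × ℤ → ℂ) (mx my : ℕ)
    (x y : K) (γx γy : (K × K) →₀ ℂ) : Prop :=
  ∀ A B : MvPolynomial (Fin 3) ℂ, ¬ kernelPoly St w mx my ∣ B →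
    AdmitsDecoupling St w mx my A B →
      fracEval St w x y A B (x, y) =
          chainEval St w x y A B γx + chainEval St w x y A B γy ∧
        chainEval St w x y A B γx ∈ kxF St w x y ∧
        chainEval St w x y A B γy ∈ kyF St w x y

/-- `(gx, gy, a)` is a decoupling of `(x,y)` in the orbit. -/
def IsDecoupling (St : Finset (ℤ × ℤ)) (w : ℤ × ℤ → ℂ) (mx my : ℕ)
    (x y : K) (gx gy a : (K × K) →₀ ℂ) : Prop :=
  Finsupp.single (x, y) (1 : ℂ) = gx + gy + a ∧
  (∀ σ ∈ Gx St w x y, actChain σ gx = gx) ∧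
  (∀ σ ∈ Gy St w x y, actChain σ gy = gy) ∧
  CancelsDecoupled St w mx my x y a

/-- The `x`-part of the boundary of a `1`-chain. -/
def boundaryX (St : Finset (ℤ × ℤ)) (w : ℤ × ℤ → ℂ)
    (c : ((K × K) × (K × K)) →₀ ℂ) : (K × K) →₀ ℂ :=
  c.sum fun e coeff =>
    if XAdj St w e.1 e.2 then
      coeff • (Finsupp.single e.2 (1 : ℂ) - Finsupp.single e.1 (1 : ℂ)) else 0

/-- The `y`-part of the boundary of a `1`-chain. -/
def boundaryY (St : Finset (ℤ × ℤ)) (w : ℤ × ℤ → ℂ)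
    (c : ((K × K) × (K × K)) →₀ ℂ) : (K × K) →₀ ℂ :=
  c.sum fun e coeff =>
    if YAdj St w e.1 e.2 then
      coeff • (Finsupp.single e.2 (1 : ℂ) - Finsupp.single e.1 (1 : ℂ)) else 0

/-- The `0`-chain induced by a bicolored loop. -/
def IsBicoloredChain (St : Finset (ℤ × ℤ)) (w : ℤ × ℤ → ℂ) (x y : K)
    (α : (K × K) →₀ ℂ) : Prop :=
  ∃ (n : ℕ) (b : ℕ → K × K), 0 < n ∧ b (2 * n) = b 0 ∧
    (∀ j < 2 * n, b j ∈ orbit St w x y) ∧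
    (∀ i < n, XAdj St w (b (2 * i)) (b (2 * i + 1)) ∧
      YAdj St w (b (2 * i + 1)) (b (2 * i + 2))) ∧
    α = ∑ j ∈ Finset.range (2 * n), ((-1 : ℂ) ^ (j + 1)) • Finsupp.single (b j) (1 : ℂ)

/-- The `0`-chain `ω = (1/|𝒪|) ∑_{a ∈ 𝒪} a`. -/
def omegaChain (St : Finset (ℤ × ℤ)) (w : ℤ × ℤ → ℂ) (x y : K)
    (h : (orbit St w x y).Finite) : (K × K) →₀ ℂ :=
  ((h.toFinset.card : ℂ))⁻¹ • ∑ a ∈ h.toFinset, Finsupp.single a (1 : ℂ)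

/-- The average `[G]·γ = (1/|G|) ∑_{σ ∈ G} σ·γ` of a `0`-chain under a group. -/
def groupAverage {M : IntermediateField ℂ K} (G : Subgroup (↥M ≃ₐ[ℂ] ↥M))
    (γ : (K × K) →₀ ℂ) : (K × K) →₀ ℂ :=
  ((Nat.card G : ℂ))⁻¹ • ∑ᶠ σ ∈ (G : Set (↥M ≃ₐ[ℂ] ↥M)), actChain σ γ

/-- `ℂ[X,t]` (two variables: `0` and `1`). -/
abbrev MvP2 : Type := MvPolynomial (Fin 2) ℂ

/-- `ℂ(X,t)`, the fraction field of `ℂ[X,t]`. -/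
abbrev CXt : Type := FractionRing MvP2

/-- Constants `ℂ → ℂ(X,t)`. -/
def cconst : ℂ →+* CXt := (algebraMap MvP2 CXt).comp (MvPolynomial.C)

/-- The first generator of `ℂ(X,t)`. -/
def gen0 : CXt := algebraMap MvP2 CXt (MvPolynomial.X 0)

/-- The second generator of `ℂ(X,t)`. -/
def gen1 : CXt := algebraMap MvP2 CXt (MvPolynomial.X 1)

/-- The kernel polynomial viewed as a polynomial in `Y` over `ℂ(X,t)`. -/
def kernelInY (St : Finset (ℤ × ℤ)) (w : ℤ × ℤ → ℂ) (mx my : ℕ) :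
    Polynomial CXt :=
  MvPolynomial.eval₂ ((Polynomial.C : CXt →+* Polynomial CXt).comp cconst)
    ![Polynomial.C gen0, Polynomial.X, Polynomial.C gen1]
    (kernelPoly St w mx my)

/-- The kernel polynomial viewed as a polynomial in `X` over `ℂ(Y,t)`. -/
def kernelInX (St : Finset (ℤ × ℤ)) (w : ℤ × ℤ → ℂ) (mx my : ℕ) :
    Polynomial CXt :=
  MvPolynomial.eval₂ ((Polynomial.C : CXt →+* Polynomial CXt).comp cconst)
    ![Polynomial.X, Polynomial.C gen0, Polynomial.C gen1]
    (kernelPoly St w mx my)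

/-- The kernel polynomial viewed as a polynomial in `X, Y` over `ℂ(t)`. -/
def kernelInXY (St : Finset (ℤ × ℤ)) (w : ℤ × ℤ → ℂ) (mx my : ℕ) :
    MvPolynomial (Fin 2) (RatFunc ℂ) :=
  MvPolynomial.eval₂
    ((MvPolynomial.C : RatFunc ℂ →+* MvPolynomial (Fin 2) (RatFunc ℂ)).comp
      (RatFunc.C : ℂ →+* RatFunc ℂ))
    ![MvPolynomial.X 0, MvPolynomial.X 1, MvPolynomial.C RatFunc.X]
    (kernelPoly St w mx my)

/-- The specialization `K̃(x, Y, 1/S(x,y))` as a polynomial in `Y` over `k(x)`. -/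
def kernelAtX (St : Finset (ℤ × ℤ)) (w : ℤ × ℤ → ℂ) (mx my : ℕ) (x y : K) :
    Polynomial ↥(kxF St w x y) :=
  MvPolynomial.aeval
    ![Polynomial.C (⟨x, x_mem_kxF St w x y⟩ : kxF St w x y), Polynomial.X,
      Polynomial.C (⟨(stepEval St w x y)⁻¹, inv_mem (S_mem_kxF St w x y)⟩ : kxF St w x y)]
    (kernelPoly St w mx my)

/-- The specialization `K̃(X, y, 1/S(x,y))` as a polynomial in `X` over `k(y)`. -/
def kernelAtY (St : Finset (ℤ × ℤ)) (w : ℤ × ℤ → ℂ) (mx my : ℕ) (x y : K) :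
    Polynomial ↥(kyF St w x y) :=
  MvPolynomial.aeval
    ![Polynomial.X, Polynomial.C (⟨y, y_mem_kyF St w x y⟩ : kyF St w x y),
      Polynomial.C (⟨(stepEval St w x y)⁻¹, inv_mem (S_mem_kyF St w x y)⟩ : kyF St w x y)]
    (kernelPoly St w mx my)

/-- Values of regular fractions with numerator and denominator supported on a set
of variables. -/
def regRange (St : Finset (ℤ × ℤ)) (w : ℤ × ℤ → ℂ) (x y : K) (mx my : ℕ)
    (s : Set (Fin 3)) : Set K :=
  {z | ∃ A B : MvPolynomial (Fin 3) ℂ,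
    A ∈ MvPolynomial.supported ℂ s ∧ B ∈ MvPolynomial.supported ℂ s ∧
    ¬ kernelPoly St w mx my ∣ B ∧ z = evalXY St w x y A / evalXY St w x y B}

end QuadrantWalk
namespace QuadrantWalk

variable {K : Type} [Field K] [Algebra ℂ K]

lemma stepEval_map' (St : Finset (ℤ × ℤ)) (w : ℤ × ℤ → ℂ) (σ : K →ₐ[ℂ] K) (u v : K) :
    σ (stepEval St w u v) = stepEval St w (σ u) (σ v) := by
  simp only [stepEval, map_sum, map_mul, AlgHom.commutes, map_zpow₀]

lemma adj_map' (St : Finset (ℤ × ℤ)) (w : ℤ × ℤ → ℂ) (σ : K →ₐ[ℂ] K) {a b : K × K}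
    (h : Adj St w a b) : Adj St w (Prod.map σ σ a) (Prod.map σ σ b) := by
  rcases h with ⟨h1, h2⟩ | ⟨h1, h2⟩
  · exact Or.inl ⟨congrArg σ h1, by
      simp only [Prod.map, ← stepEval_map']
      exact congrArg σ h2⟩
  · exact Or.inr ⟨congrArg σ h1, by
      simp only [Prod.map, ← stepEval_map']
      exact congrArg σ h2⟩

lemma orbit_map' (St : Finset (ℤ × ℤ)) (w : ℤ × ℤ → ℂ) (x y : K) (σ : K →ₐ[ℂ] K)
    (hbase : (σ x, σ y) ∈ orbit St w x y) {a : K × K} (ha : a ∈ orbit St w x y) :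
    (σ a.1, σ a.2) ∈ orbit St w x y := by
  have h2 := Relation.ReflTransGen.lift (Prod.map σ σ)
    (fun a b h => adj_map' St w σ h) _ _ ha
  exact Relation.ReflTransGen.trans hbase h2

lemma S_mem_kxyF (St : Finset (ℤ × ℤ)) (w : ℤ × ℤ → ℂ) (x y : K) :
    stepEval St w x y ∈ kxyF x y := by
  have hx : x ∈ kxyF x y := subset_adjoin ℂ _ (Set.mem_insert _ _)
  have hy : y ∈ kxyF x y := subset_adjoin ℂ _ (Set.mem_insert_of_mem _ rfl)
  exact sum_mem fun p _ =>
    mul_mem (mul_mem ((kxyF x y).algebraMap_mem (w p)) (zpow_mem hx p.1)) (zpow_mem hy p.2)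

lemma fixed_of_mem (L : IntermediateField ℂ K) (σ : K →ₐ[↥L] K) {z : K} (hz : z ∈ L) :
    σ z = z := σ.commutes ⟨z, hz⟩

lemma orbitF_stable (St : Finset (ℤ × ℤ)) (w : ℤ × ℤ → ℂ) (x y : K)
    (L : IntermediateField ℂ K) (hS : stepEval St w x y ∈ L)
    (σ : K →ₐ[↥L] K) (hbase : (σ x, σ y) ∈ orbit St w x y) :
    ∀ z ∈ orbitF St w x y, σ z ∈ orbitF St w x y := by
  intro z hz
  let σ' : K →ₐ[ℂ] K := σ.restrictScalars ℂ
  have hbase' : (σ' x, σ' y) ∈ orbit St w x y := hbase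
  have key : (orbitF St w x y).map σ' ≤ orbitF St w x y := by
    rw [orbitF, IntermediateField.adjoin_map]
    refine IntermediateField.adjoin_le_iff.2 ?_
    rintro _ ⟨u, hu, rfl⟩
    rcases hu with hu | ⟨a, ha, hc⟩
    · rcases hu with rfl
      have hfix : σ' (stepEval St w x y) = stepEval St w x y := fixed_of_mem L σ hS
      rw [hfix]
      exact S_mem_orbitF St w x y
    · have horb : (σ' a.1, σ' a.2) ∈ orbit St w x y := orbit_map' St w x y σ' hbase' ha
      apply subset_adjoin
      rcases hc with rfl | rfl
      · exact Set.mem_union_right _ ⟨(σ' a.1, σ' a.2), horb, Or.inl rfl⟩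
      · exact Set.mem_union_right _ ⟨(σ' a.1, σ' a.2), horb, Or.inr rfl⟩
  exact key ⟨z, hz, rfl⟩

lemma isAlgebraic_of_ringHom {F1 F2 : Type} [Field F1] [Field F2] [Algebra F1 K] [Algebra F2 K]
    (f : F1 →+* F2) (hf : (algebraMap F2 K).comp f = algebraMap F1 K)
    {z : K} (h : IsAlgebraic F1 z) : IsAlgebraic F2 z := by
  obtain ⟨p, hp0, hp⟩ := h
  have hinj : Function.Injective f := by
    have h2 : Function.Injective ((algebraMap F2 K).comp f) := by
      rw [hf]; exact (algebraMap F1 K).injective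
    exact fun a b hab => h2 (by simp [RingHom.comp_apply, hab])
  refine ⟨p.map f, fun h0 => hp0 ((Polynomial.map_eq_zero_iff hinj).1 h0), ?_⟩
  rw [Polynomial.aeval_def, Polynomial.eval₂_map, hf, ← Polynomial.aeval_def]
  exact hp

lemma isAlgebraic_snd (St : Finset (ℤ × ℤ)) (w : ℤ × ℤ → ℂ)
    (hw : ∀ p ∈ St, w p ≠ 0)
    (hj : ∃ p ∈ St, ∃ q ∈ St, p.2 ≠ q.2)
    (u v : K) (hu_tr : Transcendental ℂ u) (hu0 : u ≠ 0) (hv0 : v ≠ 0)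
    (E : IntermediateField ℂ K) (hu : u ∈ E) (hs : stepEval St w u v ∈ E) :
    IsAlgebraic (↥E) v := by
  classical
  obtain ⟨p₀, hp₀, q₀, hq₀, hpq⟩ := hj
  obtain ⟨j, hjex, hj0⟩ : ∃ j : ℤ, (∃ p ∈ St, p.2 = j) ∧ j ≠ 0 := by
    by_cases h : p₀.2 = 0
    · exact ⟨q₀.2, ⟨q₀, hq₀, rfl⟩, fun hq => hpq (by rw [h, hq])⟩
    · exact ⟨p₀.2, ⟨p₀, hp₀, rfl⟩, h⟩
  obtain ⟨pj, hpj, hpj2⟩ := hjex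
  set my : ℕ := St.sup fun p => (-p.2).toNat with hmy_def
  have hmy : ∀ p ∈ St, (0:ℤ) ≤ p.2 + my := by
    intro p hp
    have h1 : (-p.2).toNat ≤ my := Finset.le_sup (f := fun p => (-p.2).toNat) hp
    have h2 : -p.2 ≤ ((-p.2).toNat : ℤ) := Int.self_le_toNat _
    omega
  set uE : ↥E := ⟨u, hu⟩ with huE
  set sE : ↥E := ⟨stepEval St w u v, hs⟩ with hsE
  set a : ℤ × ℤ → ↥E := fun q => algebraMap ℂ ↥E (w q) * uE ^ q.1 with ha
  set P : Polynomial ↥E :=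
    (∑ q ∈ St, Polynomial.C (a q) * Polynomial.X ^ (q.2 + (my:ℤ)).toNat)
      - Polynomial.C sE * Polynomial.X ^ my with hP
  have hcoe : ∀ q : ℤ × ℤ, algebraMap (↥E) K (a q) = algebraMap ℂ K (w q) * u ^ q.1 := by
    intro q
    have h1 : a q = algebraMap ℂ ↥E (w q) * uE ^ q.1 := rfl
    rw [h1, map_mul, map_zpow₀, ← IsScalarTower.algebraMap_apply ℂ (↥E) K,
      IntermediateField.algebraMap_apply]
  have haeval : Polynomial.aeval v P = 0 := by
    have hterm : ∀ q ∈ St,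
        algebraMap (↥E) K (a q) * v ^ (q.2 + (my:ℤ)).toNat
          = algebraMap ℂ K (w q) * u ^ q.1 * v ^ q.2 * v ^ my := by
      intro q hq
      rw [hcoe]
      have h1 : v ^ (q.2 + (my:ℤ)).toNat = v ^ q.2 * v ^ (my:ℤ) := by
        rw [← zpow_natCast v ((q.2 + (my:ℤ)).toNat), Int.toNat_of_nonneg (hmy q hq),
          zpow_add₀ hv0]
      rw [h1, zpow_natCast]
      ring
    simp only [hP, map_sub, map_sum, map_mul, map_pow, Polynomial.aeval_C, Polynomial.aeval_X]
    have hsum : ∑ q ∈ St, (algebraMap ↥E K) (a q) * v ^ (q.2 + (my:ℤ)).toNat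
        = stepEval St w u v * v ^ my := by
      rw [stepEval, Finset.sum_mul]
      exact Finset.sum_congr rfl fun q hq => hterm q hq
    rw [hsum]
    have hsEK : (algebraMap ↥E K) sE = stepEval St w u v := rfl
    rw [hsEK]
    ring
  have hjnn : (0:ℤ) ≤ j + my := by
    have := hmy pj hpj
    omega
  set n : ℕ := (j + (my:ℤ)).toNat with hn
  have hPcoeff : P.coeff n = ∑ q ∈ St.filter (fun q => q.2 = j), a q := by
    have hnmy : ¬ (n = my) := by
      intro h
      apply hj0
      omega
    rw [hP, Polynomial.coeff_sub, Polynomial.finset_sum_coeff]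
    simp only [Polynomial.coeff_C_mul, Polynomial.coeff_X_pow, mul_ite, mul_one, mul_zero]
    rw [if_neg hnmy, sub_zero, Finset.sum_filter]
    refine Finset.sum_congr rfl fun q hq => ?_
    have h1 := hmy q hq
    have hiff : (n = (q.2 + (my:ℤ)).toNat) ↔ q.2 = j := by omega
    by_cases hc : q.2 = j
    · rw [if_pos (hiff.2 hc), if_pos hc]
    · rw [if_neg (fun h => hc (hiff.1 h)), if_neg hc]
  -- nonzeroness of the sum of coefficients
  set mx : ℕ := St.sup fun q => (-q.1).toNat with hmx_def
  have hmx : ∀ q ∈ St, (0:ℤ) ≤ q.1 + mx := by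
    intro q hq
    have h1 : (-q.1).toNat ≤ mx := Finset.le_sup (f := fun q => (-q.1).toNat) hq
    have h2 : -q.1 ≤ ((-q.1).toNat : ℤ) := Int.self_le_toNat _
    omega
  set Q : Polynomial ℂ :=
    ∑ q ∈ St.filter (fun q => q.2 = j), Polynomial.C (w q) * Polynomial.X ^ (q.1 + (mx:ℤ)).toNat
    with hQ
  have hpjf : pj ∈ St.filter (fun q => q.2 = j) := Finset.mem_filter.2 ⟨hpj, hpj2⟩
  have hQ0 : Q ≠ 0 := by
    intro h0
    have hc : Q.coeff ((pj.1 + (mx:ℤ)).toNat) = w pj := by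
      rw [hQ, Polynomial.finset_sum_coeff]
      simp only [Polynomial.coeff_C_mul, Polynomial.coeff_X_pow, mul_ite, mul_one, mul_zero]
      rw [Finset.sum_eq_single_of_mem pj hpjf]
      · rw [if_pos rfl]
      · intro q hq hne
        rw [if_neg]
        intro h
        apply hne
        have hq1 := Finset.mem_filter.1 hq
        have h1 := hmx q hq1.1
        have h2 := hmx pj hpj
        have : q.1 = pj.1 := by omega
        exact Prod.ext this (hq1.2.trans hpj2.symm)
    rw [h0] at hc
    exact hw pj hpj (by simpa using hc.symm)
  have hQeval : Polynomial.aeval u Q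
      = (∑ q ∈ St.filter (fun q => q.2 = j), algebraMap ℂ K (w q) * u ^ q.1) * u ^ mx := by
    rw [hQ, map_sum, Finset.sum_mul]
    refine Finset.sum_congr rfl fun q hq => ?_
    have hq1 := Finset.mem_filter.1 hq
    rw [map_mul, map_pow, Polynomial.aeval_C, Polynomial.aeval_X]
    have h1 : u ^ (q.1 + (mx:ℤ)).toNat = u ^ q.1 * u ^ (mx:ℤ) := by
      rw [← zpow_natCast u ((q.1 + (mx:ℤ)).toNat), Int.toNat_of_nonneg (hmx q hq1.1),
        zpow_add₀ hu0]
    rw [h1, zpow_natCast]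
    ring
  have hcsum_ne : (∑ q ∈ St.filter (fun q => q.2 = j), algebraMap ℂ K (w q) * u ^ q.1) ≠ 0 := by
    intro h0
    have heval0 : Polynomial.aeval u Q = 0 := by rw [hQeval, h0, zero_mul]
    exact hu_tr ⟨Q, hQ0, heval0⟩
  have hPc_ne : P.coeff n ≠ 0 := by
    rw [hPcoeff]
    intro h0
    apply hcsum_ne
    have h1 : algebraMap (↥E) K (∑ q ∈ St.filter (fun q => q.2 = j), a q) = 0 := by
      rw [h0, map_zero]
    rw [map_sum] at h1
    rw [← h1]
    exact Finset.sum_congr rfl fun q _ => (hcoe q).symm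
  exact ⟨P, fun h0 => hPc_ne (by rw [h0, Polynomial.coeff_zero]), haeval⟩

lemma stepEval_swap (St : Finset (ℤ × ℤ)) (w : ℤ × ℤ → ℂ) (u v : K) :
    stepEval (St.image Prod.swap) (fun p => w p.swap) v u = stepEval St w u v := by
  rw [stepEval, Finset.sum_image (fun p _ q _ h => Prod.swap_injective h)]
  refine Finset.sum_congr rfl fun q hq => ?_
  simp only [Prod.swap_swap, Prod.fst_swap, Prod.snd_swap]
  ring

lemma algebraic_K (x y : K) (halgK : Algebra.IsAlgebraic ↥(kxyF x y) K)
    (L : IntermediateField ℂ K) (t : K) (ht : IsAlgebraic ↥L t)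
    (hx : x ∈ IntermediateField.adjoin ↥L ({t} : Set K))
    (hy : y ∈ IntermediateField.adjoin ↥L ({t} : Set K)) :
    Algebra.IsAlgebraic ↥L K := by
  let N : IntermediateField ↥L K := IntermediateField.adjoin ↥L {t}
  haveI : FiniteDimensional ↥L ↥N := IntermediateField.adjoin.finiteDimensional ht.isIntegral
  haveI h1 : Algebra.IsAlgebraic ↥L ↥N := Algebra.IsAlgebraic.of_finite _ _
  have hsub : ∀ z ∈ kxyF x y, z ∈ N := by
    intro z hz
    have hle : kxyF x y ≤ N.restrictScalars ℂ := by
      refine IntermediateField.adjoin_le_iff.2 ?_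
      intro s hsm
      rcases Set.mem_insert_iff.mp hsm with h | h
      · rw [h]; exact hx
      · rw [Set.mem_singleton_iff.mp h]; exact hy
    exact hle hz
  haveI h2 : Algebra.IsAlgebraic ↥N K := by
    constructor
    intro z
    let f : ↥(kxyF x y) →+* ↥N :=
      { toFun := fun a => (⟨a.1, hsub a.1 a.2⟩ : ↥N)
        map_one' := rfl
        map_mul' := fun _ _ => rfl
        map_zero' := rfl
        map_add' := fun _ _ => rfl }
    have hf : (algebraMap ↥N K).comp f = algebraMap ↥(kxyF x y) K :=
      RingHom.ext fun a => rfl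
    exact isAlgebraic_of_ringHom f hf (halgK.isAlgebraic z)
  exact Algebra.IsAlgebraic.trans ↥L ↥N K

lemma galois_aux (St : Finset (ℤ × ℤ)) (w : ℤ × ℤ → ℂ) (x y : K)
    (hset : Setting St w x y) (L : IntermediateField ℂ K)
    (halg : Algebra.IsAlgebraic ↥L K) (hS : stepEval St w x y ∈ L)
    (hbase : ∀ σ : K →ₐ[↥L] K, (σ x, σ y) ∈ orbit St w x y)
    (hle : L ≤ orbitF St w x y) :
    IsGalois ↥L ↥(extendScalars hle) := by
  haveI : IsAlgClosed K := hset.algClosed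
  haveI : Algebra.IsAlgebraic ↥L K := halg
  haveI : IsAlgClosure ↥L K := ⟨hset.algClosed, halg⟩
  haveI hnormK : Normal ↥L K := inferInstance
  haveI hnorm : Normal ↥L ↥(extendScalars hle) := by
    rw [IntermediateField.normal_iff_forall_map_le]
    intro σ z hz
    obtain ⟨u, hu, rfl⟩ := hz
    exact orbitF_stable St w x y L hS σ (hbase σ) u hu
  haveI : CharZero ↥L := charZero_of_injective_algebraMap (algebraMap ℂ ↥L).injective
  haveI halg2 : Algebra.IsAlgebraic ↥L ↥(extendScalars hle) := inferInstance
  haveI : Algebra.IsIntegral ↥L ↥(extendScalars hle) :=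
    Algebra.isAlgebraic_iff_isIntegral.mp halg2
  exact ⟨⟩

/-- the extensions `k(𝒪)|k(x)`, `k(𝒪)|k(y)` and `k(𝒪)|k(x,y)` are Galois. -/
theorem stmt5 {K : Type} [Field K] [Algebra ℂ K]
    (St : Finset (ℤ × ℤ)) (w : ℤ × ℤ → ℂ) (x y : K)
    (hset : Setting St w x y) :
    ∃ (h1 : kxF St w x y ≤ orbitF St w x y)
      (h2 : kyF St w x y ≤ orbitF St w x y)
      (h3 : kxyF x y ≤ orbitF St w x y),
      IsGalois ↥(kxF St w x y) ↥(extendScalars h1) ∧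
      IsGalois ↥(kyF St w x y) ↥(extendScalars h2) ∧
      IsGalois ↥(kxyF x y) ↥(extendScalars h3) := by
  have htrx : Transcendental ℂ x := by simpa using hset.indep.transcendental 0
  have htry : Transcendental ℂ y := by simpa using hset.indep.transcendental 1
  have hx0 : x ≠ 0 := fun h => htrx (h ▸ isAlgebraic_zero)
  have hy0 : y ≠ 0 := fun h => htry (h ▸ isAlgebraic_zero)
  have halgxy : Algebra.IsAlgebraic ↥(kxyF x y) K := hset.algebraic
  -- y is algebraic over k(x)
  have halgy : IsAlgebraic ↥(kxF St w x y) y :=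
    isAlgebraic_snd St w hset.weight_ne hset.notUniv.2 x y htrx hx0 hy0 _
      (x_mem_kxF St w x y) (S_mem_kxF St w x y)
  -- x is algebraic over k(y), via the swapped model
  have halgx : IsAlgebraic ↥(kyF St w x y) x := by
    have hs' : stepEval (St.image Prod.swap) (fun p => w p.swap) y x ∈ kyF St w x y := by
      rw [stepEval_swap]
      exact S_mem_kyF St w x y
    refine isAlgebraic_snd (St.image Prod.swap) (fun p => w p.swap) ?_ ?_ y x htry hy0 hx0 _
      (y_mem_kyF St w x y) hs'
    · intro p hp
      obtain ⟨q, hq, rfl⟩ := Finset.mem_image.1 hp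
      simpa using hset.weight_ne q hq
    · obtain ⟨p, hp, q, hq, hpq⟩ := hset.notUniv.1
      exact ⟨p.swap, Finset.mem_image_of_mem _ hp, q.swap, Finset.mem_image_of_mem _ hq, hpq⟩
  -- algebraicity of K over each base field
  have hAx : Algebra.IsAlgebraic ↥(kxF St w x y) K := by
    refine algebraic_K x y halgxy _ y halgy ?_ ?_
    · exact (IntermediateField.adjoin ↥(kxF St w x y) ({y} : Set K)).algebraMap_mem
        ⟨x, x_mem_kxF St w x y⟩
    · exact subset_adjoin _ _ rfl
  have hAy : Algebra.IsAlgebraic ↥(kyF St w x y) K := by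
    refine algebraic_K x y halgxy _ x halgx ?_ ?_
    · exact subset_adjoin _ _ rfl
    · exact (IntermediateField.adjoin ↥(kyF St w x y) ({x} : Set K)).algebraMap_mem
        ⟨y, y_mem_kyF St w x y⟩
  have hAxy : Algebra.IsAlgebraic ↥(kxyF x y) K := halgxy
  -- the inclusions
  have h1 : kxF St w x y ≤ orbitF St w x y := by
    refine IntermediateField.adjoin_le_iff.2 ?_
    intro z hz
    rcases Set.mem_insert_iff.mp hz with h | h
    · rw [h]; exact x_mem_orbitF St w x y
    · rw [Set.mem_singleton_iff.mp h]; exact S_mem_orbitF St w x y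
  have h2 : kyF St w x y ≤ orbitF St w x y := by
    refine IntermediateField.adjoin_le_iff.2 ?_
    intro z hz
    rcases Set.mem_insert_iff.mp hz with h | h
    · rw [h]; exact y_mem_orbitF St w x y
    · rw [Set.mem_singleton_iff.mp h]; exact S_mem_orbitF St w x y
  have h3 : kxyF x y ≤ orbitF St w x y := by
    refine IntermediateField.adjoin_le_iff.2 ?_
    intro z hz
    rcases Set.mem_insert_iff.mp hz with h | h
    · rw [h]; exact x_mem_orbitF St w x y
    · rw [Set.mem_singleton_iff.mp h]; exact y_mem_orbitF St w x y
  refine ⟨h1, h2, h3, ?_, ?_, ?_⟩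
  · refine galois_aux St w x y hset _ hAx (S_mem_kxF St w x y) ?_ h1
    intro σ
    have hxfix : σ x = x := fixed_of_mem _ σ (x_mem_kxF St w x y)
    have hSfix : σ (stepEval St w x y) = stepEval St w x y :=
      fixed_of_mem _ σ (S_mem_kxF St w x y)
    have hS' : stepEval St w x y = stepEval St w (σ x) (σ y) := by
      have h := stepEval_map' St w (σ.restrictScalars ℂ) x y
      simp only [AlgHom.coe_restrictScalars'] at h
      rw [hSfix] at h
      exact h
    exact Relation.ReflTransGen.single (Or.inl ⟨hxfix.symm, hS'⟩)
  · refine galois_aux St w x y hset _ hAy (S_mem_kyF St w x y) ?_ h2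
    intro σ
    have hyfix : σ y = y := fixed_of_mem _ σ (y_mem_kyF St w x y)
    have hSfix : σ (stepEval St w x y) = stepEval St w x y :=
      fixed_of_mem _ σ (S_mem_kyF St w x y)
    have hS' : stepEval St w x y = stepEval St w (σ x) (σ y) := by
      have h := stepEval_map' St w (σ.restrictScalars ℂ) x y
      simp only [AlgHom.coe_restrictScalars'] at h
      rw [hSfix] at h
      exact h
    exact Relation.ReflTransGen.single (Or.inr ⟨hyfix.symm, hS'⟩)
  · refine galois_aux St w x y hset _ hAxy (S_mem_kxyF St w x y) ?_ h3
    intro σ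
    have hxfix : σ x = x := fixed_of_mem _ σ (subset_adjoin ℂ _ (Set.mem_insert _ _))
    have hyfix : σ y = y := fixed_of_mem _ σ (subset_adjoin ℂ _ (Set.mem_insert_of_mem _ rfl))
    rw [hxfix, hyfix]
    exact self_mem_orbit St w x y

end QuadrantWalk
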